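/- Suppose R0 > C/(C - V_L). Then the point x1 := 1 - C/(R0·(C - V_L)) satisfies 0 < x1 < 1 - 1/R0, and (x1, 0) is an equilibrium of the co-evolutionary vector field, i.e. G(x1, 0) = (0, 0). -/

import Mathlib

theorem stmt_0 (C V_H V_L θ R0 : ℝ)
    (hCH : C > V_H) (hHL : V_H > V_L) (hL : V_L > 0) (hθ : θ > 0) (hR0 : R0 > 1)
    (V : ℝ → ℝ) (hV : ∀ n, V n = n * V_H + (1 - n) * V_L)
    (f : ℝ → ℝ)
    (hf1 : ∀ x : ℝ, x < 1 - 1 / R0 → f x = 1 - 1 / (R0 * (1 - x)))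
    (hf2 : ∀ x : ℝ, x ≥ 1 - 1 / R0 → f x = 0)
    (G : ℝ × ℝ → ℝ × ℝ)
    (hG : ∀ p : ℝ × ℝ, G p = (p.1 * (1 - p.1) * (f p.1 * C - V p.2),
        p.2 * (1 - p.2) * (-p.1 + (1 + θ) * (1 - p.1))))
    (hR : R0 > C / (C - V_L)) :
    (0 < 1 - C / (R0 * (C - V_L)) ∧ 1 - C / (R0 * (C - V_L)) < 1 - 1 / R0) ∧
      G (1 - C / (R0 * (C - V_L)), 0) = (0, 0) := by
  have hCL : C - V_L > 0 := by linarith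
  have hC : C > 0 := by linarith
  have hR0pos : R0 > 0 := by linarith
  have hden : R0 * (C - V_L) > 0 := mul_pos hR0pos hCL
  have hlt : C / (R0 * (C - V_L)) < 1 := by
    rw [div_lt_one hden]
    have := (div_lt_iff₀ hCL).mp hR
    linarith [mul_comm R0 (C - V_L)]
  have h1 : 0 < 1 - C / (R0 * (C - V_L)) := by linarith
  have h2 : 1 - C / (R0 * (C - V_L)) < 1 - 1 / R0 := by
    have : 1 / R0 < C / (R0 * (C - V_L)) := by
      rw [div_lt_div_iff₀ hR0pos hden]
      ring_nf
      nlinarith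
    linarith
  refine ⟨⟨h1, h2⟩, ?_⟩
  rw [hG]
  simp only
  have hfx := hf1 _ h2
  have h1x : 1 - (1 - C / (R0 * (C - V_L))) = C / (R0 * (C - V_L)) := by ring
  rw [hfx, h1x]
  have hCne : C ≠ 0 := ne_of_gt hC
  have : R0 * (C / (R0 * (C - V_L))) = C / (C - V_L) := by
    field_simp
  rw [this, hV]
  have : 1 - 1 / (C / (C - V_L)) = V_L / C := by
    rw [one_div_div]
    field_simp
    ring
  rw [this]
  have : V_L / C * C = V_L := by field_simp
  rw [this]
  norm_num
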